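/- Let σ > 0, μ₁, μ₂ ∈ ℝ, and α ∈ ℝ. Let f₁ and f₂ denote the probability density functions of the Gaussian distributions N(μ₁, σ²) and N(μ₂, σ²) on ℝ. Then ∫_ℝ (f₁(x)/f₂(x))^α · f₂(x) dx = exp( α·(α − 1)·(μ₁ − μ₂)² / (2σ²) ); in particular, for α > 1 the Rényi divergence of order α between N(μ₁, σ²) and N(μ₂, σ²) equals α·(μ₁ − μ₂)²/(2σ²). -/

import Mathlib

/-- Gaussian probability density function with mean `μ` and standard deviation `σ`. -/
noncomputable def gpdf (μ σ x : ℝ) : ℝ :=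
  (1 / (σ * Real.sqrt (2 * Real.pi))) * Real.exp (-(x - μ) ^ 2 / (2 * σ ^ 2))

open MeasureTheory

lemma gpdf_eq_gaussianPDFReal (μ σ : ℝ) (hσ : 0 < σ) (x : ℝ) :
    gpdf μ σ x = ProbabilityTheory.gaussianPDFReal μ ⟨σ ^ 2, sq_nonneg σ⟩ x := by
  simp only [gpdf, ProbabilityTheory.gaussianPDFReal, NNReal.coe_mk]
  change _ = (√(2 * Real.pi * σ ^ 2))⁻¹ * Real.exp (-(x - μ) ^ 2 / (2 * σ ^ 2))
  rw [mul_comm (2 * Real.pi) (σ ^ 2), Real.sqrt_mul (sq_nonneg σ),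
    Real.sqrt_sq hσ.le, one_div]

lemma integral_gpdf (μ σ : ℝ) (hσ : 0 < σ) : ∫ x, gpdf μ σ x = 1 := by
  have hv : (⟨σ ^ 2, sq_nonneg σ⟩ : NNReal) ≠ 0 := by
    intro h
    have := congrArg (fun v : NNReal => (v : ℝ)) h
    replace this : σ = 0 := (pow_eq_zero_iff two_ne_zero).mp (show σ ^ 2 = 0 from this)
    exact hσ.ne' this
  rw [show (fun x => gpdf μ σ x) =
      fun x => ProbabilityTheory.gaussianPDFReal μ ⟨σ ^ 2, sq_nonneg σ⟩ x from
    funext (gpdf_eq_gaussianPDFReal μ σ hσ)]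
  exact ProbabilityTheory.integral_gaussianPDFReal_eq_one μ hv

theorem gaussian_renyi_divergence (σ μ₁ μ₂ α : ℝ) (hσ : 0 < σ) :
    (∫ x, (gpdf μ₁ σ x / gpdf μ₂ σ x) ^ α * gpdf μ₂ σ x =
        Real.exp (α * (α - 1) * (μ₁ - μ₂) ^ 2 / (2 * σ ^ 2))) ∧
    (1 < α →
      (1 / (α - 1)) *
          Real.log (∫ x, (gpdf μ₁ σ x / gpdf μ₂ σ x) ^ α * gpdf μ₂ σ x) =
        α * (μ₁ - μ₂) ^ 2 / (2 * σ ^ 2)) := by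
  have hσ2 : (σ:ℝ) ^ 2 ≠ 0 := pow_ne_zero 2 hσ.ne'
  set K : ℝ := α * (α - 1) * (μ₁ - μ₂) ^ 2 / (2 * σ ^ 2) with hK
  set m : ℝ := μ₂ + α * (μ₁ - μ₂) with hm
  have hc : (0:ℝ) < 1 / (σ * Real.sqrt (2 * Real.pi)) := by
    have : (0:ℝ) < Real.sqrt (2 * Real.pi) := Real.sqrt_pos.mpr (by positivity)
    positivity
  have hpoint : ∀ x, (gpdf μ₁ σ x / gpdf μ₂ σ x) ^ α * gpdf μ₂ σ x =
      Real.exp K * gpdf m σ x := by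
    intro x
    unfold gpdf
    rw [mul_div_mul_left _ _ hc.ne', ← Real.exp_sub, ← Real.exp_mul,
      ← mul_assoc, mul_comm (Real.exp _), mul_assoc, ← Real.exp_add,
      mul_comm (Real.exp K), mul_assoc, ← Real.exp_add]
    congr 2
    rw [hK, ← sub_div, div_mul_eq_mul_div]
    simp only [← add_div]
    congr 1
    rw [hm]
    ring
  have hint : ∫ x, (gpdf μ₁ σ x / gpdf μ₂ σ x) ^ α * gpdf μ₂ σ x = Real.exp K := by
    calc ∫ x, (gpdf μ₁ σ x / gpdf μ₂ σ x) ^ α * gpdf μ₂ σ x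
        = ∫ x, Real.exp K * gpdf m σ x := by
          exact integral_congr_ae (Filter.Eventually.of_forall hpoint)
      _ = Real.exp K * ∫ x, gpdf m σ x := integral_const_mul _ _
      _ = Real.exp K := by rw [integral_gpdf m σ hσ, mul_one]
  refine ⟨hint, fun hα => ?_⟩
  rw [hint, Real.log_exp, hK]
  have hα1 : α - 1 ≠ 0 := sub_ne_zero.mpr hα.ne'
  field_simp
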